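/- arXiv:1811.12924 — 2 statements merged into one kernel-verified Lean document; each statement's English description precedes it below -/
import Mathlib

section
/- Let σ be a permutation of the n jobs such that w_{σ(k)}/p_{σ(k)} is nonincreasing in k (a WSEPT order, obtained by giving strict priority to jobs with larger weight-to-processing-time ratio). Then F(σ) ≤ F(τ) for every permutation τ of the n jobs; i.e., the WSEPT rule minimizes the weighted sum of completion times on a single machine. -/
open Finset

/-- Completion time of the job in position `k` under schedule `σ`:
the sum of the processing times of the jobs in positions `0, …, k`. -/
noncomputable def complTime {n : ℕ} (p : Fin n → ℝ) (σ : Equiv.Perm (Fin n))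
    (k : Fin n) : ℝ :=
  ∑ i ∈ Finset.Iic k, p (σ i)

/-- Weighted sum of completion times of schedule `σ`. -/
noncomputable def wsumCompl {n : ℕ} (p w : Fin n → ℝ) (σ : Equiv.Perm (Fin n)) : ℝ :=
  ∑ k, w (σ k) * complTime p σ k

noncomputable def pairG {n : ℕ} (p w : Fin n → ℝ) (σ : Equiv.Perm (Fin n))
    (a b : Fin n) : ℝ :=
  if σ.symm a ≤ σ.symm b then p a * w b else 0

lemma wsum_eq_pairs {n : ℕ} (p w : Fin n → ℝ) (σ : Equiv.Perm (Fin n)) :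
    wsumCompl p w σ = ∑ b, ∑ a, pairG p w σ a b := by
  unfold wsumCompl complTime pairG
  have h1 : ∀ k : Fin n, w (σ k) * ∑ i ∈ Iic k, p (σ i)
      = ∑ i, if i ≤ k then p (σ i) * w (σ k) else 0 := by
    intro k
    rw [Finset.mul_sum]
    have hIic : Iic k = Finset.univ.filter (fun i => i ≤ k) := by ext i; simp
    rw [hIic, Finset.sum_filter]
    refine Finset.sum_congr rfl (fun i _ => ?_)
    split <;> [exact mul_comm _ _; rfl]
  calc ∑ k, w (σ k) * ∑ i ∈ Iic k, p (σ i)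
      = ∑ k, ∑ i, if i ≤ k then p (σ i) * w (σ k) else 0 :=
        Finset.sum_congr rfl (fun k _ => h1 k)
    _ = ∑ b, ∑ a, if σ.symm a ≤ σ.symm b then p a * w b else 0 := by
        rw [← Equiv.sum_comp σ (fun b => ∑ a, if σ.symm a ≤ σ.symm b then p a * w b else 0)]
        refine Finset.sum_congr rfl (fun k _ => ?_)
        rw [← Equiv.sum_comp σ (fun a => if σ.symm a ≤ σ.symm (σ k) then p a * w (σ k) else 0)]
        simp

lemma pairG_key {n : ℕ} (p w : Fin n → ℝ)
    (hp : ∀ j, 0 < p j)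
    (σ : Equiv.Perm (Fin n))
    (hσ : ∀ k k' : Fin n, k ≤ k' → w (σ k') / p (σ k') ≤ w (σ k) / p (σ k))
    (τ : Equiv.Perm (Fin n)) (a b : Fin n) :
    pairG p w σ a b + pairG p w σ b a ≤ pairG p w τ a b + pairG p w τ b a := by
  unfold pairG
  by_cases hab : a = b
  · subst hab; simp
  have hs : σ.symm a ≠ σ.symm b := fun h => hab (σ.symm.injective h)
  have ht : τ.symm a ≠ τ.symm b := fun h => hab (τ.symm.injective h)
  -- the WSEPT property gives: earlier in σ means smaller product the right way
  have key : ∀ x y : Fin n, σ.symm x ≤ σ.symm y → p x * w y ≤ p y * w x := by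
    intro x y h
    have := hσ (σ.symm x) (σ.symm y) h
    simp only [Equiv.apply_symm_apply] at this
    have hx := hp x; have hy := hp y
    rw [div_le_div_iff₀ hy hx] at this
    linarith
  rcases le_or_gt (σ.symm a) (σ.symm b) with h | h
  · have hnot : ¬ σ.symm b ≤ σ.symm a := fun h' => hs (le_antisymm h h')
    rw [if_pos h, if_neg hnot, add_zero]
    have hmin : p a * w b ≤ p b * w a := key a b h
    rcases le_or_gt (τ.symm a) (τ.symm b) with h2 | h2
    · have hnot2 : ¬ τ.symm b ≤ τ.symm a := fun h' => ht (le_antisymm h2 h')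
      rw [if_pos h2, if_neg hnot2, add_zero]
    · have hnot2 : ¬ τ.symm a ≤ τ.symm b := not_le.mpr h2
      rw [if_neg hnot2, if_pos h2.le, zero_add]
      exact hmin
  · have hnot : ¬ σ.symm a ≤ σ.symm b := not_le.mpr h
    rw [if_neg hnot, if_pos h.le, zero_add]
    have hmin : p b * w a ≤ p a * w b := key b a h.le
    rcases le_or_gt (τ.symm a) (τ.symm b) with h2 | h2
    · have hnot2 : ¬ τ.symm b ≤ τ.symm a := fun h' => ht (le_antisymm h2 h')
      rw [if_pos h2, if_neg hnot2, add_zero]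
      exact hmin
    · have hnot2 : ¬ τ.symm a ≤ τ.symm b := not_le.mpr h2
      rw [if_neg hnot2, if_pos h2.le, zero_add]

/-- **WSEPT optimality.** If `σ` is a WSEPT order, i.e. `w (σ k) / p (σ k)` is
nonincreasing in the position `k`, then `σ` minimizes the weighted sum of
completion times over all permutations `τ`. -/
theorem wsept_minimizes_weighted_completion_time
    (n : ℕ) (p w : Fin n → ℝ)
    (hp : ∀ j, 0 < p j) (hw : ∀ j, 0 ≤ w j)
    (σ : Equiv.Perm (Fin n))
    (hσ : ∀ k k' : Fin n, k ≤ k' → w (σ k') / p (σ k') ≤ w (σ k) / p (σ k))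
    (τ : Equiv.Perm (Fin n)) :
    wsumCompl p w σ ≤ wsumCompl p w τ := by
  have sym : ∀ ρ : Equiv.Perm (Fin n),
      2 * wsumCompl p w ρ = ∑ b, ∑ a, (pairG p w ρ a b + pairG p w ρ b a) := by
    intro ρ
    rw [wsum_eq_pairs, two_mul]
    simp only [Finset.sum_add_distrib]
    congr 1
    exact Finset.sum_comm
  have main : 2 * wsumCompl p w σ ≤ 2 * wsumCompl p w τ := by
    rw [sym σ, sym τ]
    refine Finset.sum_le_sum (fun b _ => Finset.sum_le_sum (fun a _ => ?_))
    exact pairG_key p w hp σ hσ τ a b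
  linarith
end

section
/- If a permutation σ minimizes the weighted sum of completion times, i.e., F(σ) ≤ F(τ) for every permutation τ, then σ is ordered according to the WSEPT rule at every adjacent pair: for every position k < n−1, w_{σ(k)} · p_{σ(k+1)} ≥ w_{σ(k+1)} · p_{σ(k)}, equivalently w_{σ(k)}/p_{σ(k)} ≥ w_{σ(k+1)}/p_{σ(k+1)}. -/
section aux
variable {n : ℕ} (p w : Fin n → ℝ) (σ : Equiv.Perm (Fin n)) (a b : Fin n)

lemma swap_mem_Iic (hb : (b:ℕ) = (a:ℕ) + 1) {i : Fin n} (hi : i ≠ a) (j : Fin n) :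
    Equiv.swap a b j ∈ Finset.Iic i ↔ j ∈ Finset.Iic i := by
  have hia : (i:ℕ) ≠ (a:ℕ) := fun h => hi (Fin.ext h)
  rcases eq_or_ne j a with rfl | hja
  · simp only [Equiv.swap_apply_left, Finset.mem_Iic, Fin.le_def]; omega
  rcases eq_or_ne j b with rfl | hjb
  · simp only [Equiv.swap_apply_right, Finset.mem_Iic, Fin.le_def]; omega
  · rw [Equiv.swap_apply_of_ne_of_ne hja hjb]

lemma complTime_swap_ne (hb : (b:ℕ) = (a:ℕ) + 1) {i : Fin n} (hi : i ≠ a) :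
    complTime p (σ * Equiv.swap a b) i = complTime p σ i := by
  unfold complTime
  refine Finset.sum_bijective (Equiv.swap a b) (Equiv.bijective _) ?_ ?_
  · exact fun j => (swap_mem_Iic a b hb hi j).symm
  · intro j _; simp

lemma complTime_swap_self (hb : (b:ℕ) = (a:ℕ) + 1) :
    complTime p (σ * Equiv.swap a b) a = complTime p σ a + p (σ b) - p (σ a) := by
  have ha : a ∈ Finset.Iic a := Finset.mem_Iic.2 le_rfl
  unfold complTime
  rw [← Finset.add_sum_erase _ _ ha, ← Finset.add_sum_erase _ (fun i => p (σ i)) ha]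
  have : ∑ j ∈ (Finset.Iic a).erase a, p ((σ * Equiv.swap a b) j)
      = ∑ j ∈ (Finset.Iic a).erase a, p (σ j) := by
    refine Finset.sum_congr rfl fun j hj => ?_
    obtain ⟨hja, hjle⟩ := Finset.mem_erase.1 hj
    have hjb : j ≠ b := by
      intro h; subst h
      have := Finset.mem_Iic.1 hjle
      rw [Fin.le_def] at this; omega
    simp [Equiv.swap_apply_of_ne_of_ne hja hjb]
  rw [this]
  simp only [Equiv.Perm.mul_apply, Equiv.swap_apply_left]
  ring

lemma complTime_succ (hb : (b:ℕ) = (a:ℕ) + 1) :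
    complTime p σ b = complTime p σ a + p (σ b) := by
  have : Finset.Iic b = insert b (Finset.Iic a) := by
    ext j
    simp only [Finset.mem_Iic, Finset.mem_insert, Fin.le_def, Fin.ext_iff]
    omega
  have hbnot : b ∉ Finset.Iic a := by
    simp only [Finset.mem_Iic, Fin.le_def]; omega
  unfold complTime
  rw [this, Finset.sum_insert hbnot]; ring

lemma wsum_swap (hb : (b:ℕ) = (a:ℕ) + 1) :
    wsumCompl p w (σ * Equiv.swap a b)
      = wsumCompl p w σ + (w (σ a) * p (σ b) - w (σ b) * p (σ a)) := by
  have hab : a ≠ b := by intro h; rw [h] at hb; omega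
  set τ := σ * Equiv.swap a b with hτ
  have key : ∀ i : Fin n,
      w (τ i) * complTime p τ i - w (σ i) * complTime p σ i
        = if i = a then w (σ b) * (complTime p σ a + p (σ b) - p (σ a)) - w (σ a) * complTime p σ a
          else if i = b then w (σ a) * complTime p σ b - w (σ b) * complTime p σ b
          else 0 := by
    intro i
    by_cases hia : i = a
    · rw [if_pos hia, hia, complTime_swap_self p σ a b hb]
      simp [hτ]
    by_cases hib : i = b
    · rw [if_neg hia, if_pos hib, hib,
        complTime_swap_ne p σ a b hb (by rw [hib] at hia; exact hia)]
      simp [hτ]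
    · rw [if_neg hia, if_neg hib, complTime_swap_ne p σ a b hb hia]
      have : τ i = σ i := by
        simp [hτ, Equiv.swap_apply_of_ne_of_ne hia hib]
      rw [this]; ring
  have hsum : wsumCompl p w τ - wsumCompl p w σ
      = ∑ i, (w (τ i) * complTime p τ i - w (σ i) * complTime p σ i) := by
    unfold wsumCompl; rw [Finset.sum_sub_distrib]
  have hCb := complTime_succ p σ a b hb
  have : wsumCompl p w τ - wsumCompl p w σ
      = w (σ a) * p (σ b) - w (σ b) * p (σ a) := by
    rw [hsum]
    rw [Finset.sum_congr rfl (fun i _ => key i)]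
    rw [← Finset.sum_subset (Finset.subset_univ ({a, b} : Finset (Fin n)))
      (fun x _ hx => by
        simp only [Finset.mem_insert, Finset.mem_singleton, not_or] at hx
        rw [if_neg hx.1, if_neg hx.2])]
    rw [Finset.sum_pair hab]
    rw [if_pos rfl, if_neg hab.symm, if_pos rfl]
    rw [hCb]; ring
  linarith
end aux

/-- **Optimal schedules are WSEPT-ordered at every adjacent pair.**  If `σ`
minimizes the weighted sum of completion times, then for every adjacent pair of
positions `k`, `k+1` we have
`w (σ k) * p (σ (k+1)) ≥ w (σ (k+1)) * p (σ k)`, equivalently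
`w (σ k) / p (σ k) ≥ w (σ (k+1)) / p (σ (k+1))`. -/
theorem optimal_is_adjacent_wsept
    (n : ℕ) (p w : Fin n → ℝ)
    (hp : ∀ j, 0 < p j) (hw : ∀ j, 0 ≤ w j)
    (σ : Equiv.Perm (Fin n))
    (hopt : ∀ τ : Equiv.Perm (Fin n), wsumCompl p w σ ≤ wsumCompl p w τ)
    (k : ℕ) (hk : k + 1 < n) :
    w (σ ⟨k + 1, hk⟩) * p (σ ⟨k, by omega⟩)
      ≤ w (σ ⟨k, by omega⟩) * p (σ ⟨k + 1, hk⟩)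
    ∧ w (σ ⟨k + 1, hk⟩) / p (σ ⟨k + 1, hk⟩)
      ≤ w (σ ⟨k, by omega⟩) / p (σ ⟨k, by omega⟩) := by
  
  set a : Fin n := ⟨k, by omega⟩
  set b : Fin n := ⟨k + 1, hk⟩
  have hb : (b : ℕ) = (a : ℕ) + 1 := rfl
  have h1 := hopt (σ * Equiv.swap a b)
  rw [wsum_swap p w σ a b hb] at h1
  have hmul : w (σ b) * p (σ a) ≤ w (σ a) * p (σ b) := by linarith
  refine ⟨hmul, ?_⟩
  rw [div_le_div_iff₀ (hp _) (hp _)]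
  exact hmul
end
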